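/- Let r,s,x be nonzero complex numbers with rs a primitive ℓ-th root of unity for some positive integer ℓ and rs^{-1} not a root of unity. Then the representation π_x^ℓ of the algebra generated by e_i, f_i, k_i^{±1}, l_i^{±1} (i=1,2,3) on the 4ℓ-dimensional space V^ℓ is irreducible: every nonzero subspace W of V^ℓ invariant under all the operators e_i, f_i, k_i^{±1}, l_i^{±1} equals V^ℓ. -/
import Mathlib


noncomputable section

/-- `V^ℓ` with basis `j_p`, `j ∈ {1,2,3,4}` (coded as `Fin 4`), `p ∈ ℤ/ℓℤ`. -/
abbrev VL (ℓ : ℕ) := Fin 4 × ZMod ℓ → ℂ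

variable (ℓ : ℕ)

/-- `e₁(2_p) = (1−r⁻¹s) 1_{p+1}`, other basis vectors killed. -/
def e1 (r s : ℂ) : VL ℓ → VL ℓ := fun v q =>
  if q.1 = 0 then (1 - r⁻¹ * s) * v (1, q.2 - 1) else 0

/-- `e₂(3_p) = (r⁻¹s−1) 2_p`, `e₂(1_p) = (r⁻¹s−1) x (rs)^{-p} 4_p`, others killed. -/
def e2 [NeZero ℓ] (r s x : ℂ) : VL ℓ → VL ℓ := fun v q =>
  if q.1 = 1 then (r⁻¹ * s - 1) * v (2, q.2)
  else if q.1 = 3 then (r⁻¹ * s - 1) * x * (r * s) ^ (-(q.2.val : ℤ)) * v (0, q.2) else 0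

/-- `e₃(4_p) = (1−rs⁻¹) 3_{p−1}`, others killed. -/
def e3 (r s : ℂ) : VL ℓ → VL ℓ := fun v q =>
  if q.1 = 2 then (1 - r * s⁻¹) * v (3, q.2 + 1) else 0

/-- `f₁(1_p) = (1−rs⁻¹) 2_p`, others killed. -/
def f1 (r s : ℂ) : VL ℓ → VL ℓ := fun v q =>
  if q.1 = 1 then (1 - r * s⁻¹) * v (0, q.2) else 0

/-- `f₂(2_p) = (rs⁻¹−1) 3_p`, others killed. -/
def f2 (r s : ℂ) : VL ℓ → VL ℓ := fun v q =>
  if q.1 = 2 then (r * s⁻¹ - 1) * v (1, q.2) else 0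

/-- `f₃(3_p) = (1−r⁻¹s) 4_p`, others killed. -/
def f3 (r s : ℂ) : VL ℓ → VL ℓ := fun v q =>
  if q.1 = 3 then (1 - r⁻¹ * s) * v (2, q.2) else 0

/-- `k₁(y_p) = (s,r,1,1)_y y_{p+1}`. -/
def k1 (r s : ℂ) : VL ℓ → VL ℓ := fun v q => ![s, r, 1, 1] q.1 * v (q.1, q.2 - 1)

/-- inverse of `k₁`. -/
def k1inv (r s : ℂ) : VL ℓ → VL ℓ := fun v q => (![s, r, 1, 1] q.1)⁻¹ * v (q.1, q.2 + 1)

/-- `k₂(y_p) = (1,s,s,1)_y y_p`. -/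
def k2 (r s : ℂ) : VL ℓ → VL ℓ := fun v q => ![1, s, s, 1] q.1 * v q

/-- inverse of `k₂`. -/
def k2inv (r s : ℂ) : VL ℓ → VL ℓ := fun v q => (![1, s, s, 1] q.1)⁻¹ * v q

/-- `k₃(y_p) = (1,1,r,s)_y y_{p−1}`. -/
def k3 (r s : ℂ) : VL ℓ → VL ℓ := fun v q => ![1, 1, r, s] q.1 * v (q.1, q.2 + 1)

/-- inverse of `k₃`. -/
def k3inv (r s : ℂ) : VL ℓ → VL ℓ := fun v q => (![1, 1, r, s] q.1)⁻¹ * v (q.1, q.2 - 1)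


/-- delta function at a basis index. -/
def dl (ℓ : ℕ) (i : Fin 4 × ZMod ℓ) : VL ℓ := fun j => if i = j then 1 else 0

lemma aux_inj {ℓ : ℕ} [NeZero ℓ] {z : ℂ} (hprim : IsPrimitiveRoot z ℓ) :
    Function.Injective (fun p : ZMod ℓ => z ^ (-(p.val : ℤ))) := by
  intro p p' h
  simp only [zpow_neg, inv_inj] at h
  rw [zpow_natCast, zpow_natCast] at h
  exact ZMod.val_injective ℓ (hprim.pow_inj p.val_lt p'.val_lt h)

lemma Tcalc (ℓ : ℕ) [NeZero ℓ] (r s x : ℂ) (w : VL ℓ) :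
    e1 ℓ r s (e2 ℓ r s x (e3 ℓ r s (e2 ℓ r s x w))) = fun q =>
      if q.1 = 0 then
        ((1 - r⁻¹ * s) * (r⁻¹ * s - 1) * (r⁻¹ * s - 1) * (1 - r * s⁻¹) * x) *
          (r * s) ^ (-(q.2.val : ℤ)) * w (0, q.2)
      else 0 := by
  funext q
  rcases q with ⟨j, p⟩
  by_cases hj : j = 0
  · subst hj
    simp [e1, e2, e3, sub_add_cancel]
    ring
  · simp [e1, hj]

/-- if `rs` is a primitive `ℓ`-th root of unity and `rs⁻¹` is not a root
of unity, the representation `π_x^ℓ` on the `4ℓ`-dimensional space `V^ℓ` is irreducible: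
every nonzero subspace invariant under the operators `e_i, f_i, k_i^{±1}, l_i^{±1}`
(`l_i` being `k_i` with `r` and `s` interchanged) equals `V^ℓ`. -/
theorem stmt14 (ℓ : ℕ) [NeZero ℓ] (hℓ : 0 < ℓ) (r s x : ℂ)
    (hr : r ≠ 0) (hs : s ≠ 0) (hx : x ≠ 0)
    (hprim : IsPrimitiveRoot (r * s) ℓ)
    (hroot : ∀ k : ℕ, 0 < k → (r * s⁻¹) ^ k ≠ 1)
    (W : Submodule ℂ (VL ℓ)) (hW : W ≠ ⊥)
    (he1 : ∀ v ∈ W, e1 ℓ r s v ∈ W) (he2 : ∀ v ∈ W, e2 ℓ r s x v ∈ W)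
    (he3 : ∀ v ∈ W, e3 ℓ r s v ∈ W)
    (hf1 : ∀ v ∈ W, f1 ℓ r s v ∈ W) (hf2 : ∀ v ∈ W, f2 ℓ r s v ∈ W)
    (hf3 : ∀ v ∈ W, f3 ℓ r s v ∈ W)
    (hk1 : ∀ v ∈ W, k1 ℓ r s v ∈ W) (hk1' : ∀ v ∈ W, k1inv ℓ r s v ∈ W)
    (hk2 : ∀ v ∈ W, k2 ℓ r s v ∈ W) (hk2' : ∀ v ∈ W, k2inv ℓ r s v ∈ W)
    (hk3 : ∀ v ∈ W, k3 ℓ r s v ∈ W) (hk3' : ∀ v ∈ W, k3inv ℓ r s v ∈ W)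
    (hl1 : ∀ v ∈ W, k1 ℓ s r v ∈ W) (hl1' : ∀ v ∈ W, k1inv ℓ s r v ∈ W)
    (hl2 : ∀ v ∈ W, k2 ℓ s r v ∈ W) (hl2' : ∀ v ∈ W, k2inv ℓ s r v ∈ W)
    (hl3 : ∀ v ∈ W, k3 ℓ s r v ∈ W) (hl3' : ∀ v ∈ W, k3inv ℓ s r v ∈ W) :
    W = ⊤ := by
  classical
  have hrs1 : r * s⁻¹ ≠ 1 := by simpa using hroot 1 one_pos
  have hsr1 : r⁻¹ * s ≠ 1 := by
    intro h
    exact hrs1 (by rw [(inv_mul_eq_one₀ hr).mp h, mul_inv_cancel₀ hs])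
  have hc1 : (1 : ℂ) - r⁻¹ * s ≠ 0 := sub_ne_zero.mpr (Ne.symm hsr1)
  have hc2 : r⁻¹ * s - 1 ≠ 0 := sub_ne_zero.mpr hsr1
  have hc3 : (1 : ℂ) - r * s⁻¹ ≠ 0 := sub_ne_zero.mpr (Ne.symm hrs1)
  have hc3' : r * s⁻¹ - 1 ≠ 0 := sub_ne_zero.mpr hrs1
  have hK : (1 - r⁻¹ * s) * (r⁻¹ * s - 1) * (r⁻¹ * s - 1) * (1 - r * s⁻¹) * x ≠ 0 :=
    mul_ne_zero (mul_ne_zero (mul_ne_zero (mul_ne_zero hc1 hc2) hc2) hc3) hx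
  have hμinj : Function.Injective (fun p : ZMod ℓ => (r * s) ^ (-(p.val : ℤ))) :=
    aux_inj hprim
  -- Step A: pick a nonzero vector in W
  obtain ⟨v, hvW, hvne⟩ : ∃ v ∈ W, v ≠ 0 := by
    by_contra h
    push_neg at h
    exact hW (by
      ext v
      simp only [Submodule.mem_bot]
      exact ⟨fun hv => h v hv, by rintro rfl; exact W.zero_mem⟩)
  obtain ⟨q0, hq0⟩ : ∃ q, v q ≠ 0 := by
    by_contra h; push_neg at h; exact hvne (funext h)
  -- Step B: a vector in W supported on component 0 with a nonzero value
  have hsupp_e1 : ∀ (u : VL ℓ) (q : Fin 4 × ZMod ℓ), q.1 ≠ 0 → e1 ℓ r s u q = 0 := by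
    intro u q hq; simp [e1, hq]
  obtain ⟨w0, hw0W, hw0supp, p00, hp00⟩ :
      ∃ w ∈ W, (∀ q : Fin 4 × ZMod ℓ, q.1 ≠ 0 → w q = 0) ∧ ∃ p : ZMod ℓ, w (0, p) ≠ 0 := by
    obtain ⟨j, p⟩ := q0
    fin_cases j
    · refine ⟨e1 ℓ r s (f1 ℓ r s v), he1 _ (hf1 _ hvW), hsupp_e1 _, p + 1, ?_⟩
      simp only [e1, f1, add_sub_cancel_right]
      simpa using mul_ne_zero hc1 (mul_ne_zero hc3 hq0)
    · refine ⟨e1 ℓ r s v, he1 _ hvW, hsupp_e1 _, p + 1, ?_⟩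
      simp only [e1, add_sub_cancel_right]
      simpa using mul_ne_zero hc1 hq0
    · refine ⟨e1 ℓ r s (e2 ℓ r s x v), he1 _ (he2 _ hvW), hsupp_e1 _, p + 1, ?_⟩
      simp only [e1, e2, add_sub_cancel_right]
      simpa using mul_ne_zero hc1 (mul_ne_zero hc2 hq0)
    · refine ⟨e1 ℓ r s (e2 ℓ r s x (e3 ℓ r s v)), he1 _ (he2 _ (he3 _ hvW)), hsupp_e1 _, p, ?_⟩
      simp only [e1, e2, e3, sub_add_cancel]
      simpa using mul_ne_zero hc1 (mul_ne_zero hc2 (mul_ne_zero hc3 hq0))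
  -- Step C: eigenvalue separation, extract a delta function in W
  have main : ∀ n : ℕ, ∀ w : VL ℓ, w ∈ W → (∀ q : Fin 4 × ZMod ℓ, q.1 ≠ 0 → w q = 0) →
      ∀ p0 : ZMod ℓ, w (0, p0) ≠ 0 →
      (Finset.univ.filter fun p : ZMod ℓ => w (0, p) ≠ 0).card = n →
      ∃ p : ZMod ℓ, dl ℓ (0, p) ∈ W := by
    intro n
    induction n using Nat.strong_induction_on with
    | _ n ih =>
      intro w hw hsupp p0 hp0 hcard
      by_cases hone : ∀ p, p ≠ p0 → w (0, p) = 0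
      · refine ⟨p0, ?_⟩
        have hEq : dl ℓ (0, p0) = (w (0, p0))⁻¹ • w := by
          funext q
          rcases q with ⟨j, p⟩
          simp only [dl, Pi.smul_apply, smul_eq_mul]
          by_cases hj : j = 0
          · subst hj
            by_cases hp : p = p0
            · subst hp; simp [inv_mul_cancel₀ hp0]
            · rw [hone p hp]
              simp [Prod.ext_iff, Ne.symm hp]
          · rw [hsupp (j, p) hj]
            simp [Prod.ext_iff, Ne.symm hj]
        rw [hEq]
        exact W.smul_mem _ hw
      · push_neg at hone
        obtain ⟨p1, hp1ne, hp1⟩ := hone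
        set K : ℂ := (1 - r⁻¹ * s) * (r⁻¹ * s - 1) * (r⁻¹ * s - 1) * (1 - r * s⁻¹) * x
          with hKdef
        set w' : VL ℓ :=
          e1 ℓ r s (e2 ℓ r s x (e3 ℓ r s (e2 ℓ r s x w))) -
            (K * (r * s) ^ (-(p1.val : ℤ))) • w with hw'def
        have hw'W : w' ∈ W :=
          W.sub_mem (he1 _ (he2 _ (he3 _ (he2 _ hw)))) (W.smul_mem _ hw)
        have hw'eq0 : ∀ p : ZMod ℓ, w' (0, p) =
            K * ((r * s) ^ (-(p.val : ℤ)) - (r * s) ^ (-(p1.val : ℤ))) * w (0, p) := by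
          intro p
          have hT' : e1 ℓ r s (e2 ℓ r s x (e3 ℓ r s (e2 ℓ r s x w))) (0, p) =
              K * (r * s) ^ (-(p.val : ℤ)) * w (0, p) := by
            simpa [← hKdef] using congrFun (Tcalc ℓ r s x w) ((0 : Fin 4), p)
          simp only [hw'def, Pi.sub_apply, Pi.smul_apply, smul_eq_mul, hT']
          ring
        have hsupp' : ∀ q : Fin 4 × ZMod ℓ, q.1 ≠ 0 → w' q = 0 := by
          intro q hq
          have hT' : e1 ℓ r s (e2 ℓ r s x (e3 ℓ r s (e2 ℓ r s x w))) q = 0 := by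
            simpa [hq] using congrFun (Tcalc ℓ r s x w) q
          simp [hw'def, hT', hsupp q hq]
        have hp0' : w' (0, p0) ≠ 0 := by
          rw [hw'eq0]
          refine mul_ne_zero (mul_ne_zero hK (sub_ne_zero.mpr fun hh => ?_)) hp0
          exact hp1ne (hμinj hh).symm
        have hfilter : (Finset.univ.filter fun p : ZMod ℓ => w' (0, p) ≠ 0) =
            (Finset.univ.filter fun p : ZMod ℓ => w (0, p) ≠ 0).erase p1 := by
          ext p
          simp only [Finset.mem_filter, Finset.mem_erase, Finset.mem_univ, true_and]
          rw [hw'eq0 p]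
          constructor
          · intro h
            constructor
            · intro hpe
              exact h (by rw [hpe]; simp)
            · intro hwp
              exact h (by rw [hwp, mul_zero])
          · rintro ⟨hne, hwp⟩
            exact mul_ne_zero (mul_ne_zero hK (sub_ne_zero.mpr fun hh => hne (hμinj hh))) hwp
        have hp1mem : p1 ∈ Finset.univ.filter fun p : ZMod ℓ => w (0, p) ≠ 0 := by
          simp [hp1]
        have hcard' : (Finset.univ.filter fun p : ZMod ℓ => w' (0, p) ≠ 0).card = n - 1 := by
          rw [hfilter, Finset.card_erase_of_mem hp1mem, hcard]
        have hn : 0 < n := by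
          rw [← hcard]
          exact Finset.card_pos.mpr ⟨p1, hp1mem⟩
        exact ih (n - 1) (by omega) w' hw'W hsupp' p0 hp0' hcard'
  obtain ⟨pδ, hpδ⟩ := main _ w0 hw0W hw0supp p00 hp00 rfl
  -- Step D: propagate the delta function to all basis vectors
  have hshift : ∀ p : ZMod ℓ, dl ℓ (0, p) ∈ W → dl ℓ (0, p + 1) ∈ W := by
    intro p hp
    have h1 : k1 ℓ r s (dl ℓ (0, p)) = s • dl ℓ (0, p + 1) := by
      funext q
      rcases q with ⟨j, p'⟩
      simp only [k1, dl, Pi.smul_apply, smul_eq_mul]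
      by_cases hj : j = 0
      · subst hj
        by_cases hp' : p' = p + 1
        · subst hp'; simp [Prod.ext_iff, add_sub_cancel_right]
        · have h2 : p ≠ p' - 1 := fun h => hp' (eq_sub_iff_add_eq.mp h).symm
          simp [Prod.ext_iff, h2, Ne.symm hp']
      · simp [Prod.ext_iff, Ne.symm hj]
    have h := hk1 _ hp
    rw [h1] at h
    have h2 := W.smul_mem s⁻¹ h
    rwa [smul_smul, inv_mul_cancel₀ hs, one_smul] at h2
  have hall0 : ∀ q : ZMod ℓ, dl ℓ (0, q) ∈ W := by
    have key : ∀ k : ℕ, dl ℓ (0, pδ + (k : ZMod ℓ)) ∈ W := by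
      intro k
      induction k with
      | zero => simpa using hpδ
      | succ k ihk =>
        have h : pδ + ((k + 1 : ℕ) : ZMod ℓ) = (pδ + (k : ZMod ℓ)) + 1 := by
          push_cast; ring
        rw [h]
        exact hshift _ ihk
    intro q
    have h : q = pδ + (((q - pδ).val : ℕ) : ZMod ℓ) := by
      rw [ZMod.natCast_val, ZMod.cast_id]; ring
    rw [h]
    exact key _
  have hd1 : ∀ q : ZMod ℓ, dl ℓ (1, q) ∈ W := by
    intro q
    have h1 : f1 ℓ r s (dl ℓ (0, q)) = (1 - r * s⁻¹) • dl ℓ (1, q) := by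
      funext q'
      rcases q' with ⟨j, p'⟩
      simp only [f1, dl, Pi.smul_apply, smul_eq_mul]
      by_cases hj : j = 1
      · subst hj; simp [Prod.ext_iff]
      · simp [hj, Prod.ext_iff, Ne.symm hj]
    have h := hf1 _ (hall0 q)
    rw [h1] at h
    have h2 := W.smul_mem (1 - r * s⁻¹)⁻¹ h
    rwa [smul_smul, inv_mul_cancel₀ hc3, one_smul] at h2
  have hd2 : ∀ q : ZMod ℓ, dl ℓ (2, q) ∈ W := by
    intro q
    have h1 : f2 ℓ r s (dl ℓ (1, q)) = (r * s⁻¹ - 1) • dl ℓ (2, q) := by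
      funext q'
      rcases q' with ⟨j, p'⟩
      simp only [f2, dl, Pi.smul_apply, smul_eq_mul]
      by_cases hj : j = 2
      · subst hj; simp [Prod.ext_iff]
      · simp [hj, Prod.ext_iff, Ne.symm hj]
    have h := hf2 _ (hd1 q)
    rw [h1] at h
    have h2 := W.smul_mem (r * s⁻¹ - 1)⁻¹ h
    rwa [smul_smul, inv_mul_cancel₀ hc3', one_smul] at h2
  have hd3 : ∀ q : ZMod ℓ, dl ℓ (3, q) ∈ W := by
    intro q
    have h1 : f3 ℓ r s (dl ℓ (2, q)) = (1 - r⁻¹ * s) • dl ℓ (3, q) := by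
      funext q'
      rcases q' with ⟨j, p'⟩
      simp only [f3, dl, Pi.smul_apply, smul_eq_mul]
      by_cases hj : j = 3
      · subst hj; simp [Prod.ext_iff]
      · simp [hj, Prod.ext_iff, Ne.symm hj]
    have h := hf3 _ (hd2 q)
    rw [h1] at h
    have h2 := W.smul_mem (1 - r⁻¹ * s)⁻¹ h
    rwa [smul_smul, inv_mul_cancel₀ hc1, one_smul] at h2
  -- Step E: conclude
  rw [eq_top_iff]
  intro u _
  rw [pi_eq_sum_univ u]
  refine Submodule.sum_mem _ fun i _ => Submodule.smul_mem _ _ ?_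
  obtain ⟨j, q⟩ := i
  have : (fun j' => if ((j, q) : Fin 4 × ZMod ℓ) = j' then (1 : ℂ) else 0) = dl ℓ (j, q) := rfl
  rw [this]
  fin_cases j
  · exact hall0 q
  · exact hd1 q
  · exact hd2 q
  · exact hd3 q


end
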